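/- For fixed i ∈ [n−1], the indicator statistic of whether i and n lie in the same cycle of w is (1/2)-mesic with respect to the action of φ̄ = I ∘ F^{-1} ∘ R ∘ F on S_n (for n ≥ 2). -/

import Mathlib

/-- The cycle of `w` containing `x`, listed starting at `x`:
`[x, w x, w² x, …]` with each element appearing once. -/
def cyc {n : ℕ} (w : Equiv.Perm (Fin n)) (x : Fin n) : List (Fin n) :=
  (List.range n).foldl (fun acc k => if (w ^ k) x ∈ acc then acc else acc ++ [(w ^ k) x]) []

/-- The Rényi–Foata word of `w`: write the canonical cycle decomposition
(each cycle starting with its largest element, cycles listed in increasing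
order of largest elements) and drop the parentheses. -/
def foataWord {n : ℕ} (w : Equiv.Perm (Fin n)) : List (Fin n) :=
  ((List.finRange n).filter (fun x => decide (∀ y ∈ cyc w x, y ≤ x))).flatMap (cyc w)

/-- The Rényi–Foata map, as a function `Fin n → Fin n` reading off the word. -/
def foataFun {n : ℕ} (w : Equiv.Perm (Fin n)) : Fin n → Fin n :=
  fun i => (foataWord w).getD i.val ⟨0, i.pos⟩

/-- One-line notation of a permutation, as a list of values in `Fin n`. -/
def oneLineF {n : ℕ} (w : Equiv.Perm (Fin n)) : List (Fin n) :=
  (List.finRange n).map w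

/-- One-line notation with natural-number entries (0-indexed values). -/
def oneLineN {n : ℕ} (w : Equiv.Perm (Fin n)) : List ℕ :=
  (List.finRange n).map fun i => (w i : ℕ)

/-- The Rényi–Foata word with natural-number entries. -/
def wordN {n : ℕ} (w : Equiv.Perm (Fin n)) : List ℕ :=
  (foataWord w).map Fin.val

/-- `i` is a record (left-to-right maximum) position of the word `L`. -/
def recB (L : List ℕ) (i : ℕ) : Bool :=
  decide (i < L.length ∧ ∀ j < i, L.getD j 0 < L.getD i 0)

/-- Number of records (left-to-right maxima) of the word `L`. -/
def recordCount (L : List ℕ) : ℕ :=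
  ((List.range L.length).filter (recB L)).length

/-- Number of fixed points (1-cycles) of `w`. -/
def fixCount {n : ℕ} (w : Equiv.Perm (Fin n)) : ℕ :=
  (Finset.univ.filter fun i : Fin n => w i = i).card

/-- `IsPhi w w'` says that `w' = φ(w)` where `φ = F ∘ I ∘ F⁻¹ ∘ R`:
first reverse the one-line notation of `w`, then apply `F⁻¹` (giving the
unique `u` whose Foata word is that reversal), invert `u`, and apply `F`. -/
def IsPhi {n : ℕ} (w w' : Equiv.Perm (Fin n)) : Prop :=
  ∃ u : Equiv.Perm (Fin n),
    foataWord u = (oneLineF w).reverse ∧ oneLineF w' = foataWord u⁻¹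

/-- `IsPhiBar w w'` says that `w' = φ̄(w)` where `φ̄ = I ∘ F⁻¹ ∘ R ∘ F`:
apply `F` to `w`, reverse the resulting word, apply `F⁻¹`, and invert. -/
def IsPhiBar {n : ℕ} (w w' : Equiv.Perm (Fin n)) : Prop :=
  foataWord w'⁻¹ = (foataWord w).reverse

/-- `IsGamma w w'` says that `w' = γ(w)` where `γ = I ∘ F⁻¹ ∘ C ∘ F`:
apply `F` to `w`, complement each entry of the resulting word, apply `F⁻¹`,
and invert. -/
def IsGamma {n : ℕ} (w w' : Equiv.Perm (Fin n)) : Prop :=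
  foataWord w'⁻¹ = (foataWord w).map Fin.rev

section AuxFoata

section Fold
variable {α β : Type*} [DecidableEq β] (g : α → β)

lemma mem_dfoldl : ∀ (l : List α) (acc : List β) (b : β),
    b ∈ l.foldl (fun acc k => if g k ∈ acc then acc else acc ++ [g k]) acc ↔
      b ∈ acc ∨ ∃ a ∈ l, g a = b
  | [], acc, b => by simp
  | a :: l, acc, b => by
    rw [List.foldl_cons, mem_dfoldl l]
    by_cases h : g a ∈ acc <;> simp [h] <;> aesop

lemma nodup_dfoldl : ∀ (l : List α) (acc : List β), acc.Nodup →
    (l.foldl (fun acc k => if g k ∈ acc then acc else acc ++ [g k]) acc).Nodup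
  | [], acc, h => h
  | a :: l, acc, h => by
    rw [List.foldl_cons]
    refine nodup_dfoldl l _ ?_
    by_cases hm : g a ∈ acc
    · simpa [hm] using h
    · simpa [hm, ← List.concat_eq_append] using h.concat hm

lemma prefix_dfoldl : ∀ (l : List α) (acc : List β),
    acc <+: l.foldl (fun acc k => if g k ∈ acc then acc else acc ++ [g k]) acc
  | [], acc => List.prefix_refl acc
  | a :: l, acc => by
    rw [List.foldl_cons]
    refine List.IsPrefix.trans ?_ (prefix_dfoldl l _)
    by_cases hm : g a ∈ acc <;> simp [hm]

end Fold

variable {n : ℕ} (w : Equiv.Perm (Fin n))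

lemma mem_cyc (x y : Fin n) : y ∈ cyc w x ↔ w.SameCycle x y := by
  rw [cyc, mem_dfoldl]
  constructor
  · rintro (h | ⟨k, -, rfl⟩)
    · simp at h
    · exact ⟨(k : ℤ), by rw [zpow_natCast]⟩
  · intro h
    refine Or.inr ?_
    by_cases hx : w x = x
    · obtain ⟨j, hj⟩ := h
      rw [Equiv.Perm.zpow_apply_eq_self_of_apply_eq_self hx] at hj
      exact ⟨0, by simpa using x.pos, by simpa using hj⟩
    · obtain ⟨k, hk, hk'⟩ := h.exists_pow_eq_of_mem_support (Equiv.Perm.mem_support.2 hx)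
      refine ⟨k, ?_, hk'⟩
      have : (w.cycleOf x).support.card ≤ n := by
        simpa using Finset.card_le_univ (w.cycleOf x).support
      simp only [List.mem_range]
      omega

lemma nodup_cyc (x : Fin n) : (cyc w x).Nodup :=
  nodup_dfoldl _ _ _ List.nodup_nil

lemma cyc_head (x : Fin n) : ∃ t, cyc w x = x :: t := by
  rcases n with - | m
  · exact x.elim0
  · rw [cyc, List.range_succ_eq_map, List.foldl_cons]
    have h1 : (if (w ^ 0) x ∈ ([] : List (Fin (m+1))) then [] else [] ++ [(w ^ 0) x]) = [x] := by
      simp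
    rw [h1]
    obtain ⟨t, ht⟩ := prefix_dfoldl (fun k => (w ^ k) x) (List.map Nat.succ (List.range m)) [x]
    exact ⟨t, ht.symm⟩

lemma max_uniq {x x' : Fin n} (hx : ∀ y ∈ cyc w x, y ≤ x) (hx' : ∀ y ∈ cyc w x', y ≤ x')
    (h : w.SameCycle x x') : x = x' :=
  le_antisymm (hx' x ((mem_cyc w x' x).2 h.symm)) (hx x' ((mem_cyc w x x').2 h))

lemma mem_foataWord (y : Fin n) : y ∈ foataWord w := by
  classical
  have hy : y ∈ Finset.univ.filter (fun z => w.SameCycle y z) := by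
    simp [Equiv.Perm.SameCycle.refl]
  set s := Finset.univ.filter (fun z => w.SameCycle y z) with hs
  have hne : s.Nonempty := ⟨y, hy⟩
  set x := s.max' hne with hxdef
  have hxs : x ∈ s := s.max'_mem hne
  have hxy : w.SameCycle y x := by simpa [hs] using hxs
  have hmax : ∀ z ∈ cyc w x, z ≤ x := by
    intro z hz
    refine s.le_max' z ?_
    have : w.SameCycle x z := (mem_cyc w x z).1 hz
    simp [hs, hxy.trans this]
  rw [foataWord, List.mem_flatMap]
  refine ⟨x, ?_, (mem_cyc w x y).2 hxy.symm⟩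
  rw [List.mem_filter]
  exact ⟨List.mem_finRange x, by simpa using hmax⟩

lemma decomp (lst : Fin n) (hlst : ∀ y : Fin n, y ≤ lst) :
    ∃ A T : List (Fin n), foataWord w = A ++ lst :: T ∧
      (∀ y, y ∈ A ↔ ¬ w.SameCycle lst y) ∧
      (∀ y, y ∈ T ↔ (w.SameCycle lst y ∧ y ≠ lst)) := by
  classical
  set p : Fin n → Bool := fun x => decide (∀ y ∈ cyc w x, y ≤ x) with hp
  set l : List (Fin n) := (List.finRange n).filter p with hl
  have hpl : l.Pairwise (· < ·) := (List.pairwise_lt_finRange n).filter p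
  have hlstl : lst ∈ l := by
    rw [hl, List.mem_filter]
    refine ⟨List.mem_finRange lst, ?_⟩
    simp only [hp, decide_eq_true_iff]
    exact fun y _ => hlst y
  have hlne : l ≠ [] := fun h => by simp [h] at hlstl
  have hsplit : l = l.dropLast ++ [lst] := by
    have h1 : l = l.dropLast ++ [l.getLast hlne] := (List.dropLast_append_getLast hlne).symm
    have h2 : l.getLast hlne = lst := by
      by_contra hne
      have : lst ∈ l.dropLast := by
        have := hlstl
        rw [h1, List.mem_append] at this
        rcases this with h | h
        · exact h
        · simp at h; exact absurd h.symm hne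
      have hlt : lst < l.getLast hlne := by
        have := hpl
        rw [h1, List.pairwise_append] at this
        exact this.2.2 lst ‹_› _ (by simp)
      exact absurd (hlst _) (not_le.2 hlt)
    rw [← h2]; exact h1
  have hMlt : ∀ x ∈ l.dropLast, x < lst := by
    intro x hx
    have := hpl
    rw [hsplit, List.pairwise_append] at this
    exact this.2.2 x hx lst (by simp)
  obtain ⟨T, hT⟩ := cyc_head w lst
  refine ⟨l.dropLast.flatMap (cyc w), T, ?_, ?_, ?_⟩
  · rw [foataWord, ← hl, hsplit, List.flatMap_append, ← hT]
    simp
  · intro y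
    constructor
    · rw [List.mem_flatMap]
      rintro ⟨x, hxM, hymem⟩ hsc
      have hxmax : ∀ z ∈ cyc w x, z ≤ x := by
        have : x ∈ l := by rw [hsplit]; exact List.mem_append_left _ hxM
        rw [hl, List.mem_filter, hp] at this
        simpa using this.2
      have hxy : w.SameCycle x y := (mem_cyc w x y).1 hymem
      have : x = lst := max_uniq w hxmax (fun z _ => hlst z) (hxy.trans hsc.symm)
      exact absurd this (hMlt x hxM).ne
    · intro hsc
      have hy := mem_foataWord w y
      rw [foataWord, ← hl, hsplit, List.flatMap_append, List.mem_append] at hy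
      rcases hy with h | h
      · exact h
      · simp only [List.flatMap_cons, List.flatMap_nil, List.append_nil] at h
        exact absurd ((mem_cyc w lst y).1 h) hsc
  · intro y
    have hmem : y ∈ lst :: T ↔ w.SameCycle lst y := by rw [← hT]; exact mem_cyc w lst y
    have hnd : (lst :: T).Nodup := by rw [← hT]; exact nodup_cyc w lst
    constructor
    · intro hy
      refine ⟨hmem.1 (List.mem_cons_of_mem _ hy), ?_⟩
      rintro rfl
      exact (List.nodup_cons.1 hnd).1 hy
    · rintro ⟨hsc, hne⟩
      rcases List.mem_cons.1 (hmem.2 hsc) with h | h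
      · exact absurd h hne
      · exact h

lemma split_unique {α : Type*} (a : α) : ∀ (A A' T T' : List α),
    A ++ a :: T = A' ++ a :: T' → a ∉ A → a ∉ A' → A = A' ∧ T = T'
  | [], [], T, T', h, _, _ => ⟨rfl, by simpa using h⟩
  | [], b :: A', T, T', h, _, hA' => by
    simp only [List.nil_append, List.cons_append, List.cons.injEq] at h
    exact absurd (h.1 ▸ (List.mem_cons_self : b ∈ b :: A')) hA'
  | b :: A, [], T, T', h, hA, _ => by
    simp only [List.nil_append, List.cons_append, List.cons.injEq] at h
    exact absurd (h.1.symm ▸ (List.mem_cons_self : b ∈ b :: A)) hA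
  | b :: A, c :: A', T, T', h, hA, hA' => by
    simp only [List.cons_append, List.cons.injEq] at h
    obtain ⟨h1, h2⟩ := split_unique a A A' T T' h.2
      (fun hx => hA (List.mem_cons_of_mem _ hx)) (fun hx => hA' (List.mem_cons_of_mem _ hx))
    exact ⟨by rw [h.1, h1], h2⟩

lemma flip_lemma (lst : Fin n) (hlst : ∀ y : Fin n, y ≤ lst) (i : Fin n) (hi : i ≠ lst)
    (u u' : Equiv.Perm (Fin n)) (h : foataWord u'⁻¹ = (foataWord u).reverse) :
    u'.SameCycle i lst ↔ ¬ u.SameCycle i lst := by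
  obtain ⟨A, T, hw, hA, hT⟩ := decomp u lst hlst
  obtain ⟨A', T', hw', hA', hT'⟩ := decomp u'⁻¹ lst hlst
  have hrev : A' ++ lst :: T' = T.reverse ++ lst :: A.reverse := by
    rw [← hw', h, hw]
    simp
  have hlA' : lst ∉ A' := fun hx => (hA' lst).1 hx (Equiv.Perm.SameCycle.refl _ _)
  have hlT : lst ∉ T.reverse := fun hx => ((hT lst).1 (List.mem_reverse.1 hx)).2 rfl
  obtain ⟨-, hTT⟩ := split_unique lst A' T.reverse T' A.reverse hrev hlA' hlT
  calc u'.SameCycle i lst ↔ u'⁻¹.SameCycle lst i := by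
        rw [Equiv.Perm.sameCycle_inv, Equiv.Perm.sameCycle_comm]
    _ ↔ i ∈ T' := by rw [hT' i]; simp [hi]
    _ ↔ i ∈ A := by rw [hTT, List.mem_reverse]
    _ ↔ ¬ u.SameCycle lst i := hA i
    _ ↔ ¬ u.SameCycle i lst := by rw [Equiv.Perm.sameCycle_comm]

end AuxFoata

/-- For fixed `i ∈ [n−1]` (with `n ≥ 2`), the indicator
statistic of whether `i` and `n` lie in the same cycle of `w` is
`(1/2)`-mesic for the action of `φ̄ = I ∘ F⁻¹ ∘ R ∘ F` on `S_n`. -/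
theorem sameCycle_half_mesic_phiBar (n : ℕ) (hn : 2 ≤ n)
    (i : Fin n) (hi : (i : ℕ) < n - 1)
    (φ : Equiv.Perm (Fin n) → Equiv.Perm (Fin n))
    (hφ : ∀ w, IsPhiBar w (φ w)) (w : Equiv.Perm (Fin n)) :
    ∑ k ∈ Finset.range (Function.minimalPeriod φ w),
        (if (φ^[k] w).SameCycle i ⟨n - 1, by omega⟩ then (1 : ℚ) else 0) =
      (Function.minimalPeriod φ w : ℚ) / 2 := by
  classical
  set lst : Fin n := ⟨n - 1, by omega⟩ with hlstdef
  have hlst : ∀ y : Fin n, y ≤ lst := by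
    intro y
    have := y.isLt
    simp only [Fin.le_def, hlstdef]
    omega
  have hine : i ≠ lst := by
    simp only [Fin.ne_iff_vne, hlstdef]
    omega
  set p := Function.minimalPeriod φ w with hpdef
  have halt : ∀ k : ℕ, ((φ^[k + 1] w).SameCycle i lst ↔ ¬ (φ^[k] w).SameCycle i lst) := by
    intro k
    rw [Function.iterate_succ_apply']
    exact flip_lemma lst hlst i hine _ _ (hφ (φ^[k] w))
  rcases Nat.eq_zero_or_pos p with hp0 | hppos
  · rw [hp0]; simp
  · have key : ∀ k : ℕ, (((φ^[k] w).SameCycle i lst ↔ w.SameCycle i lst) ↔ Even k) := by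
      intro k
      induction k with
      | zero => simp
      | succ m ih =>
        rw [halt m, Nat.even_add_one, ← ih]
        tauto
    have hper : φ^[p] w = w := Function.iterate_minimalPeriod
    have heven : Even p := (key p).1 (by rw [hper])
    obtain ⟨m, hm⟩ := heven
    have hsum : ∀ m' : ℕ,
        ∑ k ∈ Finset.range (m' + m'),
          (if (φ^[k] w).SameCycle i lst then (1 : ℚ) else 0) = m' := by
      intro m'
      induction m' with
      | zero => simp
      | succ m' ih =>
        have e : m' + 1 + (m' + 1) = (m' + m') + 1 + 1 := by omega
        rw [e, Finset.sum_range_succ, Finset.sum_range_succ, ih]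
        by_cases hA : (φ^[m' + m'] w).SameCycle i lst
        · have hB : ¬ (φ^[m' + m' + 1] w).SameCycle i lst := fun h => (halt _).1 h hA
          rw [if_pos hA, if_neg hB]
          push_cast; ring
        · have hB : (φ^[m' + m' + 1] w).SameCycle i lst := (halt _).2 hA
          rw [if_neg hA, if_pos hB]
          push_cast; ring
    rw [hm, hsum m]
    push_cast
    ring
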